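/- arXiv:2605.22745 — 5 statements merged into one kernel-verified Lean document; each statement's English description precedes it below -/
import Mathlib

section
/- Let ξ be an n×n matrix whose entries ξ_{i,j} are the n² generators of the exterior (Grassmann) algebra Λ(V) on a vector space V of dimension n² over a field of characteristic 0. Then tr(ξ^{2k}) = 0 for all positive integers k. -/
/-- The generic `n × n` Grassmann matrix: the matrix whose `(i,j)` entry is the generator
`ξ_{i,j}` of the exterior algebra on an `n²`-dimensional vector space with basis indexed by
pairs `(i,j)`. -/
noncomputable def genericGrassmannMatrix (F : Type*) [Field F] (n : ℕ) :
    Matrix (Fin n) (Fin n) (ExteriorAlgebra F ((Fin n × Fin n) → F)) :=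
  fun i j => ExteriorAlgebra.ι F (Pi.single (i, j) 1)

section Aux

open CliffordAlgebra

variable {F M : Type*} [Field F] [AddCommGroup M] [Module F M]

/-- A single generator anticommutes with any odd element. -/
lemma exterior_ι_mul_odd (v : M) (b : ExteriorAlgebra F M)
    (hb : b ∈ evenOdd (0 : QuadraticForm F M) 1) :
    ExteriorAlgebra.ι F v * b = - (b * ExteriorAlgebra.ι F v) := by
  induction b, hb using CliffordAlgebra.odd_induction with
  | ι w =>
    exact eq_neg_of_add_eq_zero_left (ExteriorAlgebra.ι_add_mul_swap v w)
  | add x y hx hy ihx ihy =>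
    rw [mul_add, add_mul, ihx, ihy, neg_add]
  | ι_mul_ι_mul m₁ m₂ x hx ih =>
    have h1 : ExteriorAlgebra.ι F v * CliffordAlgebra.ι (0 : QuadraticForm F M) m₁ =
        - (CliffordAlgebra.ι (0 : QuadraticForm F M) m₁ * ExteriorAlgebra.ι F v) := by
      exact eq_neg_of_add_eq_zero_left (ExteriorAlgebra.ι_add_mul_swap v m₁)
    have h2 : ExteriorAlgebra.ι F v * CliffordAlgebra.ι (0 : QuadraticForm F M) m₂ =
        - (CliffordAlgebra.ι (0 : QuadraticForm F M) m₂ * ExteriorAlgebra.ι F v) := by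
      exact eq_neg_of_add_eq_zero_left (ExteriorAlgebra.ι_add_mul_swap v m₂)
    calc ExteriorAlgebra.ι F v *
          (CliffordAlgebra.ι (0 : QuadraticForm F M) m₁ *
            CliffordAlgebra.ι (0 : QuadraticForm F M) m₂ * x)
        = (ExteriorAlgebra.ι F v * CliffordAlgebra.ι (0 : QuadraticForm F M) m₁) *
            CliffordAlgebra.ι (0 : QuadraticForm F M) m₂ * x := by noncomm_ring
      _ = - ((CliffordAlgebra.ι (0 : QuadraticForm F M) m₁ *
            (ExteriorAlgebra.ι F v * CliffordAlgebra.ι (0 : QuadraticForm F M) m₂)) * x) := by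
            rw [h1]; noncomm_ring
      _ = CliffordAlgebra.ι (0 : QuadraticForm F M) m₁ *
            CliffordAlgebra.ι (0 : QuadraticForm F M) m₂ *
            (ExteriorAlgebra.ι F v * x) := by rw [h2]; noncomm_ring
      _ = - (CliffordAlgebra.ι (0 : QuadraticForm F M) m₁ *
            CliffordAlgebra.ι (0 : QuadraticForm F M) m₂ * x * ExteriorAlgebra.ι F v) := by
            rw [ih]; noncomm_ring

end Aux

open CliffordAlgebra in
/-- Entries of odd powers of the generic Grassmann matrix are odd elements. -/
lemma genericGrassmannMatrix_pow_odd_mem (F : Type*) [Field F] (n : ℕ) (j : ℕ)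
    (i l : Fin n) :
    ((genericGrassmannMatrix F n) ^ (2 * j + 1)) i l ∈
      evenOdd (0 : QuadraticForm F ((Fin n × Fin n) → F)) 1 := by
  induction j generalizing i l with
  | zero =>
    simpa [genericGrassmannMatrix] using
      CliffordAlgebra.ι_mem_evenOdd_one (0 : QuadraticForm F ((Fin n × Fin n) → F))
        (Pi.single (i, l) (1 : F))
  | succ j ih =>
    have hpow : (2 * (j + 1) + 1) = (2 * j + 1) + 1 + 1 := by ring
    rw [hpow, pow_succ, pow_succ, Matrix.mul_apply]
    refine Submodule.sum_mem _ fun b _ => ?_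
    rw [Matrix.mul_apply]
    rw [Finset.sum_mul]
    refine Submodule.sum_mem _ fun c _ => ?_
    have h1 : (genericGrassmannMatrix F n) c b ∈
        evenOdd (0 : QuadraticForm F ((Fin n × Fin n) → F)) 1 :=
      CliffordAlgebra.ι_mem_evenOdd_one _ _
    have h2 : (genericGrassmannMatrix F n) b l ∈
        evenOdd (0 : QuadraticForm F ((Fin n × Fin n) → F)) 1 :=
      CliffordAlgebra.ι_mem_evenOdd_one _ _
    have := SetLike.mul_mem_graded (SetLike.mul_mem_graded (ih i c) h1) h2
    have h3 : (1 + 1 + 1 : ZMod 2) = 1 := by decide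
    rw [h3] at this
    exact this

/-- For the generic Grassmann matrix `ξ` over a field of characteristic zero,
`tr(ξ^{2k}) = 0` for every positive integer `k`. -/
theorem trace_even_power_genericGrassmannMatrix_eq_zero
    (F : Type*) [Field F] [CharZero F] (n : ℕ) (k : ℕ) (hk : 0 < k) :
    ((genericGrassmannMatrix F n) ^ (2 * k)).trace = 0 := by
  obtain ⟨j, rfl⟩ : ∃ j, k = j + 1 := ⟨k - 1, (Nat.succ_pred_eq_of_pos hk).symm⟩
  set ξ := genericGrassmannMatrix F n
  have hpow : (2 * (j + 1)) = 1 + (2 * j + 1) := by ring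
  have key : (ξ ^ (2 * (j + 1))).trace = - (ξ ^ (2 * (j + 1))).trace := by
    calc (ξ ^ (2 * (j + 1))).trace
        = (ξ * ξ ^ (2 * j + 1)).trace := by rw [hpow, pow_add, pow_one]
      _ = ∑ i, ∑ l, ξ i l * (ξ ^ (2 * j + 1)) l i := by
          simp [Matrix.trace, Matrix.diag, Matrix.mul_apply]
      _ = ∑ i, ∑ l, - ((ξ ^ (2 * j + 1)) l i * ξ i l) := by
          refine Finset.sum_congr rfl fun i _ => Finset.sum_congr rfl fun l _ => ?_
          exact exterior_ι_mul_odd _ _ (genericGrassmannMatrix_pow_odd_mem F n j l i)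
      _ = - ∑ l, ∑ i, (ξ ^ (2 * j + 1)) l i * ξ i l := by
          rw [Finset.sum_comm]; simp
      _ = - (ξ ^ (2 * j + 1) * ξ).trace := by
          simp [Matrix.trace, Matrix.diag, Matrix.mul_apply]
      _ = - (ξ ^ (2 * (j + 1))).trace := by
          rw [← pow_succ]
          congr 2
  have h2 : (2 : F) • (ξ ^ (2 * (j + 1))).trace = 0 := by
    rw [two_smul]
    nth_rewrite 2 [key]
    exact add_neg_cancel _
  rcases smul_eq_zero.mp h2 with h | h
  · exact absurd h two_ne_zero
  · exact h
end

section
/- Every permutation γ ∈ S_p (with p ≥ m) can be written as a product γ = α ∘ β where α ∈ S_m (i.e. α fixes every point greater than m) and each cycle of β contains at most one element of {1, 2, …, m}. -/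
open Equiv Equiv.Perm

lemma sameCycle_of_swap_mul {α : Type*} [Fintype α] [DecidableEq α]
    (β : Perm α) (x y : α) (h : β.SameCycle x y) {a b : α}
    (hab : (swap x y * β).SameCycle a b) : β.SameCycle a b := by
  have step : ∀ z : α, β.SameCycle z ((swap x y * β) z) := by
    intro z
    rw [Perm.mul_apply]
    rcases eq_or_ne (β z) x with hx | hx
    · rw [hx, swap_apply_left]
      exact Equiv.Perm.SameCycle.trans (⟨1, by simpa using hx⟩ : β.SameCycle z x) h
    rcases eq_or_ne (β z) y with hy | hy
    · rw [hy, swap_apply_right]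
      exact Equiv.Perm.SameCycle.trans (⟨1, by simpa using hy⟩ : β.SameCycle z y) h.symm
    · rw [swap_apply_of_ne_of_ne hx hy]
      exact ⟨1, by simp⟩
  have key : ∀ k : ℕ, β.SameCycle a (((swap x y * β) ^ k) a) := by
    intro k
    induction k with
    | zero => exact ⟨0, rfl⟩
    | succ n ih =>
      rw [pow_succ', Perm.mul_apply]
      exact ih.trans (step _)
  obtain ⟨k, -, rfl⟩ := hab.exists_pow_eq'
  exact key k

lemma not_sameCycle_swap_mul {α : Type*} [Fintype α] [DecidableEq α]
    (β : Perm α) (x y : α) (hxy : x ≠ y) (h : β.SameCycle x y) :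
    ¬ (swap x y * β).SameCycle x y := by
  classical
  have hex : ∃ n, 0 < n ∧ ((β ^ n) x = x ∨ (β ^ n) x = y) :=
    ⟨orderOf β, orderOf_pos β, Or.inl (by simp [pow_orderOf_eq_one])⟩
  obtain ⟨n, hn0, hnxy, hmin⟩ :
      ∃ n, 0 < n ∧ ((β ^ n) x = x ∨ (β ^ n) x = y) ∧
        ∀ k, 0 < k → k < n → (β ^ k) x ≠ x ∧ (β ^ k) x ≠ y := by
    refine ⟨Nat.find hex, (Nat.find_spec hex).1, (Nat.find_spec hex).2, ?_⟩
    intro k hk0 hkn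
    have := Nat.find_min hex hkn
    push_neg at this
    exact this hk0
  have hred : ∀ (f : Perm α), (f ^ n) x = x → ∀ k, (f ^ k) x = (f ^ (k % n)) x := by
    intro f hf k
    conv_lhs => rw [← Nat.mod_add_div k n]
    rw [pow_add, Perm.mul_apply, pow_mul,
      pow_apply_eq_self_of_apply_eq_self (f := f ^ n) hf]
  rcases hnxy with hx | hy
  · exfalso
    obtain ⟨k, -, hk⟩ := h.exists_pow_eq'
    rw [hred β hx k] at hk
    rcases Nat.eq_zero_or_pos (k % n) with h0 | hpos
    · rw [h0] at hk; simp at hk; exact hxy hk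
    · exact (hmin _ hpos (Nat.mod_lt _ hn0)).2 hk
  · have horb : ∀ k < n, ((swap x y * β) ^ k) x = (β ^ k) x := by
      intro k hkn
      induction k with
      | zero => simp
      | succ j ih =>
        have hj : j < n := Nat.lt_of_succ_lt hkn
        rw [pow_succ', pow_succ', Perm.mul_apply, Perm.mul_apply, ih hj,
          Perm.mul_apply]
        have h1 : (β ^ (j+1)) x ≠ x := (hmin _ (Nat.succ_pos j) hkn).1
        have h2 : (β ^ (j+1)) x ≠ y := (hmin _ (Nat.succ_pos j) hkn).2
        rw [pow_succ', Perm.mul_apply] at h1 h2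
        exact swap_apply_of_ne_of_ne h1 h2
    have hfix : ((swap x y * β) ^ n) x = x := by
      obtain ⟨j, rfl⟩ : ∃ j, n = j + 1 :=
        ⟨n - 1, (Nat.succ_pred_eq_of_pos hn0).symm⟩
      rw [pow_succ', Perm.mul_apply, horb j (Nat.lt_succ_self j), Perm.mul_apply,
        ← Perm.mul_apply β (β ^ j), ← pow_succ', hy, swap_apply_right]
    intro hc
    obtain ⟨k, -, hk⟩ := hc.exists_pow_eq'
    rw [hred _ hfix k] at hk
    rcases Nat.eq_zero_or_pos (k % n) with h0 | hpos
    · rw [h0] at hk; simp at hk; exact hxy hk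
    · have hlt := Nat.mod_lt k hn0
      rw [horb _ hlt] at hk
      exact (hmin _ hpos hlt).2 hk



/-- Every permutation `γ ∈ S_p` (with `m ≤ p`) factors as `γ = α ∘ β` where `α` fixes
every point of index `≥ m` (so `α ∈ S_m`), and every cycle of `β` contains at most one
element of `{0, 1, …, m-1}`; i.e. any two elements of `{0,…,m-1}` lying in the same
`β`-cycle coincide. -/
theorem perm_factorization (p m : ℕ) (hm : m ≤ p) (γ : Equiv.Perm (Fin p)) :
    ∃ α β : Equiv.Perm (Fin p),
      γ = α * β ∧
      (∀ i : Fin p, m ≤ (i : ℕ) → α i = i) ∧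
      (∀ i j : Fin p, (i : ℕ) < m → (j : ℕ) < m → β.SameCycle i j → i = j) := by

  classical
  induction m with
  | zero =>
    exact ⟨1, γ, by simp, fun i _ => rfl, fun i j hi _ _ => absurd hi (Nat.not_lt_zero _)⟩
  | succ m ih =>
    obtain ⟨α, β, hγ, hα, hβ⟩ := ih (Nat.le_of_succ_le hm)
    have hmp : m < p := hm
    set x : Fin p := ⟨m, hmp⟩ with hxdef
    by_cases hex : ∃ j : Fin p, (j : ℕ) < m ∧ β.SameCycle x j
    · obtain ⟨j, hjm, hsc⟩ := hex
      have hxj : x ≠ j := by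
        intro hcon
        rw [← hcon] at hjm
        exact Nat.lt_irrefl m hjm
      refine ⟨α * Equiv.swap x j, Equiv.swap x j * β, ?_, ?_, ?_⟩
      · rw [hγ, mul_assoc, ← mul_assoc (Equiv.swap x j), Equiv.swap_mul_self, one_mul]
      · intro i hi
        have hix : i ≠ x := by
          intro hcon; rw [hcon] at hi; simp [hxdef] at hi
        have hij : i ≠ j := by
          intro hcon; rw [hcon] at hi; omega
        rw [Equiv.Perm.mul_apply, Equiv.swap_apply_of_ne_of_ne hix hij]
        exact hα i (Nat.le_of_succ_le hi)
      · intro a b ha hb hab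
        have hsplit := not_sameCycle_swap_mul β x j hxj hsc
        have hcoarse : ∀ {a b : Fin p}, (Equiv.swap x j * β).SameCycle a b → β.SameCycle a b :=
          fun hh => sameCycle_of_swap_mul β x j hsc hh
        rcases Nat.lt_or_ge (a : ℕ) m with ham | ham
        · rcases Nat.lt_or_ge (b : ℕ) m with hbm | hbm
          · exact hβ a b ham hbm (hcoarse hab)
          · -- b = x
            have hbx : b = x := Fin.ext (by simp [hxdef]; omega)
            subst hbx
            exfalso
            have h1 : β.SameCycle a j := (hcoarse hab).trans hsc
            have := hβ a j ham hjm h1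
            subst this
            exact hsplit hab.symm
        · have hax : a = x := Fin.ext (by simp [hxdef]; omega)
          subst hax
          rcases Nat.lt_or_ge (b : ℕ) m with hbm | hbm
          · exfalso
            have h1 : β.SameCycle b j := (hcoarse hab.symm).trans hsc
            have := hβ b j hbm hjm h1
            subst this
            exact hsplit hab
          · exact (Fin.ext (by simp [hxdef]; omega)).symm
    · refine ⟨α, β, hγ, fun i hi => hα i (Nat.le_of_succ_le hi), ?_⟩
      intro a b ha hb hab
      rcases Nat.lt_or_ge (a : ℕ) m with ham | ham
      · rcases Nat.lt_or_ge (b : ℕ) m with hbm | hbm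
        · exact hβ a b ham hbm hab
        · have hbx : b = x := Fin.ext (by simp [hxdef]; omega)
          subst hbx
          exact absurd ⟨a, ham, hab.symm⟩ hex
      · have hax : a = x := Fin.ext (by simp [hxdef]; omega)
        subst hax
        rcases Nat.lt_or_ge (b : ℕ) m with hbm | hbm
        · exact absurd ⟨b, hbm, hab⟩ hex
        · exact Fin.ext (by simp [hxdef]; omega)
end

section
/- For m ≤ n, the map from the group algebra ℂ[S_m] to End((ℂⁿ)^{⊗m}) given by the place-permutation action σ(v₁⊗⋯⊗v_m) = v_{σ⁻¹(1)}⊗⋯⊗v_{σ⁻¹(m)} is injective. -/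
open scoped TensorProduct

/-- The place-permutation action of `S_m` on `(ℂⁿ)^{⊗m}`:
`σ • (v₁ ⊗ ⋯ ⊗ v_m) = v_{σ⁻¹(1)} ⊗ ⋯ ⊗ v_{σ⁻¹(m)}`. -/
noncomputable def placePermHom (n m : ℕ) :
    Equiv.Perm (Fin m) →* Module.End ℂ (⨂[ℂ] _ : Fin m, (Fin n → ℂ)) where
  toFun σ := (PiTensorProduct.reindex ℂ (fun _ : Fin m => (Fin n → ℂ)) σ).toLinearMap
  map_one' := by
    ext f
    simp only [Module.End.one_apply, LinearMap.compMultilinearMap_apply,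
      MultilinearMap.compLinearMap_apply, LinearEquiv.coe_coe, PiTensorProduct.reindex_tprod]
    congr 1
  map_mul' σ τ := by
    ext f
    simp only [Module.End.mul_apply, LinearEquiv.coe_coe,
      LinearMap.compMultilinearMap_apply, MultilinearMap.compLinearMap_apply,
      PiTensorProduct.reindex_tprod]
    rfl

/-- The induced algebra map `ℂ[S_m] → End((ℂⁿ)^{⊗m})`. -/
noncomputable def placePermAlgHom (n m : ℕ) :
    MonoidAlgebra ℂ (Equiv.Perm (Fin m)) →ₐ[ℂ] Module.End ℂ (⨂[ℂ] _ : Fin m, (Fin n → ℂ)) :=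
  MonoidAlgebra.lift ℂ _ (Equiv.Perm (Fin m)) (placePermHom n m)

/-- For `m ≤ n`, the map `ℂ[S_m] → End((ℂⁿ)^{⊗m})` given by the place-permutation action
is injective. -/
theorem placePermAlgHom_injective (n m : ℕ) (h : m ≤ n) :
    Function.Injective (placePermAlgHom n m) := by

  rw [injective_iff_map_eq_zero]
  intro x hx
  -- basis vectors
  set e : Fin m → (Fin n → ℂ) := fun i => Pi.single (Fin.castLE h i) 1 with he
  -- dual functionals
  set φ : (Fin m → Fin n) → ((⨂[ℂ] _ : Fin m, (Fin n → ℂ)) →ₗ[ℂ] ℂ) :=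
    fun g => PiTensorProduct.lift
      ((MultilinearMap.mkPiAlgebra ℂ (Fin m) ℂ).compLinearMap fun i => LinearMap.proj (g i))
    with hφ
  have hφt : ∀ (g : Fin m → Fin n) (v : Fin m → (Fin n → ℂ)),
      φ g (PiTensorProduct.tprod ℂ v) = ∏ i, v i (g i) := by
    intro g v
    simp [hφ]
  ext τ
  have h0 : φ (fun i => Fin.castLE h (τ⁻¹ i))
      ((placePermAlgHom n m x) (PiTensorProduct.tprod ℂ e)) = 0 := by
    rw [hx]; simp
  rw [placePermAlgHom, MonoidAlgebra.lift_apply] at h0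
  rw [LinearMap.finsupp_sum_apply, map_finsuppSum] at h0
  have hterm : ∀ σ : Equiv.Perm (Fin m),
      φ (fun i => Fin.castLE h (τ⁻¹ i)) ((placePermHom n m σ) (PiTensorProduct.tprod ℂ e))
        = if σ = τ then 1 else 0 := by
    intro σ
    have : (placePermHom n m σ) (PiTensorProduct.tprod ℂ e)
        = PiTensorProduct.tprod ℂ (fun i => e (σ⁻¹ i)) := by
      simp [placePermHom, PiTensorProduct.reindex_tprod]
    rw [this, hφt]
    have : ∀ i, e (σ⁻¹ i) (Fin.castLE h (τ⁻¹ i)) = if σ⁻¹ i = τ⁻¹ i then 1 else 0 := by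
      intro i
      rw [he]
      simp only [Pi.single_apply]
      by_cases hc : σ⁻¹ i = τ⁻¹ i
      · simp [hc]
      · rw [if_neg, if_neg hc]
        intro hcc
        exact hc (Fin.castLE_injective h hcc).symm
    simp only [this]
    by_cases hc : σ = τ
    · simp [hc]
    · rw [if_neg hc]
      obtain ⟨i, hi⟩ : ∃ i, σ⁻¹ i ≠ τ⁻¹ i := by
        by_contra hall
        push_neg at hall
        exact hc (inv_injective (Equiv.ext hall))
      exact Finset.prod_eq_zero (Finset.mem_univ i) (if_neg hi)
  simp only [LinearMap.smul_apply, map_smul, hterm, smul_ite, smul_zero, smul_eq_mul,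
    mul_one] at h0
  simp only [mul_ite, mul_one, mul_zero] at h0
  rw [Finsupp.sum_ite_eq' x.coeff τ (fun _ b => b)] at h0
  simp only [MonoidAlgebra.coeff_zero, Finsupp.coe_zero, Pi.zero_apply]
  by_cases hmem : τ ∈ x.coeff.support
  · rwa [if_pos hmem] at h0
  · exact Finsupp.notMem_support_iff.mp hmem
end

section
/- The number of permutations in S_m having no descending subsequence of length 3 (i.e. 3-good permutations, avoiding the pattern 321) equals the m-th Catalan number C_m = (1/(m+1))·binom(2m, m). -/
set_option maxHeartbeats 1000000

open Finset

namespace ThreeGoodAux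

def StairP (n : ℕ) (t : Fin n → Fin n) : Prop :=
  (∀ i j : Fin n, (i : ℕ) ≤ (j : ℕ) → (t i : ℕ) ≤ (t j : ℕ)) ∧ ∀ i : Fin n, (i : ℕ) ≤ (t i : ℕ)

instance (n : ℕ) : DecidablePred (StairP n) := fun _ => by
  unfold StairP; infer_instance

abbrev Stair (n : ℕ) := {t : Fin n → Fin n // StairP n t}

variable {n : ℕ}

def fhP (t : Stair (n+1)) (i : ℕ) : Prop :=
  ∃ h : i < n + 1, (t.1 ⟨i, h⟩ : ℕ) = i

instance (t : Stair (n+1)) : DecidablePred (fhP t) := fun _ => exists_prop_decidable _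

lemma fh_exists (t : Stair (n+1)) : ∃ i, fhP t i := by
  refine ⟨n, Nat.lt_succ_self n, ?_⟩
  have h1 := t.2.2 ⟨n, Nat.lt_succ_self n⟩
  have h2 := (t.1 ⟨n, Nat.lt_succ_self n⟩).isLt
  simp only [Fin.val_mk] at h1 ⊢
  omega

def firstHit (t : Stair (n+1)) : Fin (n+1) :=
  ⟨Nat.find (fh_exists t), (Nat.find_spec (fh_exists t)).1⟩

lemma firstHit_val (t : Stair (n+1)) :
    (t.1 (firstHit t) : ℕ) = (firstHit t : ℕ) := (Nat.find_spec (fh_exists t)).2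

lemma firstHit_min (t : Stair (n+1)) {i : ℕ} (h : i < (firstHit t : ℕ)) (h2 : i < n + 1) :
    i < (t.1 ⟨i, h2⟩ : ℕ) := by
  have hmin := Nat.find_min (fh_exists t) h
  have hd := t.2.2 ⟨i, h2⟩
  simp only [fhP, not_exists] at hmin
  have := hmin h2
  simp only [Fin.val_mk] at hd
  omega

section Assemble

variable (k : Fin (n+1)) (t₁ : Stair (k : ℕ)) (t₂ : Stair (n - (k : ℕ)))

def assemble : Fin (n+1) → Fin (n+1) := fun i =>
  if h1 : (i : ℕ) < (k : ℕ) then ⟨(t₁.1 ⟨i, h1⟩ : ℕ) + 1, by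
    have := (t₁.1 ⟨i, h1⟩).isLt; have := k.isLt; omega⟩
  else if h2 : (i : ℕ) = (k : ℕ) then k
  else ⟨(t₂.1 ⟨(i : ℕ) - ((k : ℕ) + 1), by have := i.isLt; omega⟩ : ℕ) + ((k : ℕ) + 1), by
    have := (t₂.1 ⟨(i : ℕ) - ((k : ℕ) + 1), by have := i.isLt; omega⟩).isLt; omega⟩

lemma assemble_lt {i : Fin (n+1)} (h1 : (i : ℕ) < (k : ℕ)) :
    (assemble k t₁ t₂ i : ℕ) = (t₁.1 ⟨i, h1⟩ : ℕ) + 1 := by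
  unfold assemble; rw [dif_pos h1]

lemma assemble_eq {i : Fin (n+1)} (h : (i : ℕ) = (k : ℕ)) :
    (assemble k t₁ t₂ i : ℕ) = (k : ℕ) := by
  unfold assemble; rw [dif_neg (by omega), dif_pos h]

lemma assemble_gt {i : Fin (n+1)} (h : (k : ℕ) < (i : ℕ)) :
    (assemble k t₁ t₂ i : ℕ)
      = (t₂.1 ⟨(i : ℕ) - ((k : ℕ) + 1), by have := i.isLt; omega⟩ : ℕ) + ((k : ℕ) + 1) := by
  unfold assemble; rw [dif_neg (by omega), dif_neg (by omega)]

lemma assemble_stairP : StairP (n+1) (assemble k t₁ t₂) := by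
  constructor
  · intro i j hij
    rcases lt_trichotomy ((i : ℕ)) (k : ℕ) with hi | hi | hi <;>
      rcases lt_trichotomy ((j : ℕ)) (k : ℕ) with hj | hj | hj
    · rw [assemble_lt k t₁ t₂ hi, assemble_lt k t₁ t₂ hj]
      have := t₁.2.1 ⟨i, hi⟩ ⟨j, hj⟩ (by simpa using hij)
      simpa using this
    · rw [assemble_lt k t₁ t₂ hi, assemble_eq k t₁ t₂ hj]
      have := (t₁.1 ⟨i, hi⟩).isLt
      omega
    · rw [assemble_lt k t₁ t₂ hi, assemble_gt k t₁ t₂ hj]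
      have := (t₁.1 ⟨i, hi⟩).isLt
      omega
    · omega
    · rw [assemble_eq k t₁ t₂ hi, assemble_eq k t₁ t₂ hj]
    · rw [assemble_eq k t₁ t₂ hi, assemble_gt k t₁ t₂ hj]
      omega
    · omega
    · omega
    · rw [assemble_gt k t₁ t₂ hi, assemble_gt k t₁ t₂ hj]
      have := t₂.2.1 ⟨(i : ℕ) - ((k : ℕ) + 1), by have := i.isLt; omega⟩
        ⟨(j : ℕ) - ((k : ℕ) + 1), by have := j.isLt; omega⟩ (by simp only [Fin.val_mk]; omega)
      omega
  · intro i
    rcases lt_trichotomy ((i : ℕ)) (k : ℕ) with hi | hi | hi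
    · rw [assemble_lt k t₁ t₂ hi]
      have := t₁.2.2 ⟨i, hi⟩
      simp only [Fin.val_mk] at this
      omega
    · rw [assemble_eq k t₁ t₂ hi]; omega
    · rw [assemble_gt k t₁ t₂ hi]
      have := t₂.2.2 ⟨(i : ℕ) - ((k : ℕ) + 1), by have := i.isLt; omega⟩
      simp only [Fin.val_mk] at this
      omega

lemma assemble_firstHit : firstHit ⟨assemble k t₁ t₂, assemble_stairP k t₁ t₂⟩ = k := by
  apply Fin.ext
  unfold firstHit
  simp only [Fin.val_mk]
  rw [Nat.find_eq_iff]
  constructor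
  · exact ⟨k.isLt, by
      have : ((⟨(k : ℕ), k.isLt⟩ : Fin (n+1)) : ℕ) = (k : ℕ) := rfl
      rw [show (⟨(k : ℕ), k.isLt⟩ : Fin (n+1)) = k from Fin.ext rfl]
      exact assemble_eq k t₁ t₂ rfl⟩
  · intro i hi
    simp only [fhP, not_exists]
    intro h
    have : ((⟨i, h⟩ : Fin (n+1)) : ℕ) < (k : ℕ) := hi
    rw [assemble_lt k t₁ t₂ this]
    have := t₁.2.2 ⟨i, this⟩
    simp only [Fin.val_mk] at this ⊢
    omega

end Assemble


def disasm1 (k : Fin (n+1)) (t : Stair (n+1)) (hk : firstHit t = k) : Stair (k : ℕ) := by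
  have hkv : ∀ i : ℕ, i < (k : ℕ) → ∀ h2 : i < n + 1, i < (t.1 ⟨i, h2⟩ : ℕ) := by
    intro i hik h2
    exact firstHit_min t (by rw [hk]; exact hik) h2
  have hlt : ∀ i : Fin (k : ℕ), (i : ℕ) < n + 1 := by
    intro i; have := i.isLt; have := k.isLt; omega
  have htk : (t.1 ⟨(k : ℕ), k.isLt⟩ : ℕ) = (k : ℕ) := by
    have h := firstHit_val t
    have hfk : firstHit t = ⟨(k : ℕ), k.isLt⟩ := by rw [hk]
    rw [hfk] at h
    rw [h]
  refine ⟨fun i => ⟨(t.1 ⟨i, hlt i⟩ : ℕ) - 1, ?_⟩, ?_, ?_⟩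
  · have h1 := hkv i i.isLt (hlt i)
    have h2 : (t.1 ⟨i, hlt i⟩ : ℕ) ≤ (k : ℕ) := by
      have hm := t.2.1 ⟨i, hlt i⟩ ⟨(k : ℕ), k.isLt⟩ (le_of_lt i.isLt)
      rw [htk] at hm
      exact hm
    omega
  · intro i j hij
    have h1 := t.2.1 ⟨i, hlt i⟩ ⟨j, hlt j⟩ hij
    have h2 := hkv i i.isLt (hlt i)
    simp only [Fin.val_mk]
    omega
  · intro i
    have := hkv i i.isLt (hlt i)
    simp only [Fin.val_mk]
    omega

def disasm2 (k : Fin (n+1)) (t : Stair (n+1)) : Stair (n - (k : ℕ)) := by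
  have hlt : ∀ j : Fin (n - (k : ℕ)), (k : ℕ) + 1 + (j : ℕ) < n + 1 := by
    intro j; have := j.isLt; omega
  refine ⟨fun j => ⟨(t.1 ⟨(k : ℕ) + 1 + j, hlt j⟩ : ℕ) - ((k : ℕ) + 1), ?_⟩, ?_, ?_⟩
  · have h1 := t.2.2 ⟨(k : ℕ) + 1 + j, hlt j⟩
    have h2 := (t.1 ⟨(k : ℕ) + 1 + j, hlt j⟩).isLt
    have := j.isLt
    simp only [Fin.val_mk] at h1
    omega
  · intro i j hij
    have := t.2.1 ⟨(k : ℕ) + 1 + i, hlt i⟩ ⟨(k : ℕ) + 1 + j, hlt j⟩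
      (by simp only [Fin.val_mk]; omega)
    have h1 := t.2.2 ⟨(k : ℕ) + 1 + i, hlt i⟩
    simp only [Fin.val_mk] at this h1 ⊢
    omega
  · intro j
    have := t.2.2 ⟨(k : ℕ) + 1 + j, hlt j⟩
    simp only [Fin.val_mk] at this ⊢
    omega

lemma left_inv_aux (k : Fin (n+1)) (t : Stair (n+1)) (hk : firstHit t = k) :
    assemble k (disasm1 k t hk) (disasm2 k t) = t.1 := by
  funext i
  apply Fin.ext
  rcases lt_trichotomy ((i : ℕ)) (k : ℕ) with hi | hi | hi
  · rw [assemble_lt k _ _ hi]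
    show ((disasm1 k t hk).1 ⟨(i : ℕ), hi⟩ : ℕ) + 1 = _
    unfold disasm1
    simp only [Fin.val_mk]
    have h1 := firstHit_min t (i := (i : ℕ)) (by rw [hk]; exact hi) i.isLt
    have h2 : t.1 ⟨(i : ℕ), _⟩ = t.1 i := congrArg _ (Fin.ext rfl)
    rw [h2]
    omega
  · rw [assemble_eq k _ _ hi]
    have h := firstHit_val t
    have hfk : firstHit t = i := by rw [hk]; exact Fin.ext hi.symm
    rw [hfk] at h
    rw [h, ← hi]
  · rw [assemble_gt k _ _ hi]
    show ((disasm2 k t).1 ⟨(i : ℕ) - ((k : ℕ)+1), _⟩ : ℕ) + ((k : ℕ) + 1) = _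
    unfold disasm2
    simp only [Fin.val_mk]
    have h2 : t.1 ⟨(k : ℕ) + 1 + ((i : ℕ) - ((k : ℕ)+1)), by have := i.isLt; omega⟩ = t.1 i :=
      congrArg _ (Fin.ext (by simp only [Fin.val_mk]; omega))
    rw [h2]
    have := t.2.2 i
    omega

lemma disasm1_assemble (k : Fin (n+1)) (t₁ : Stair (k : ℕ)) (t₂ : Stair (n - (k : ℕ))) :
    disasm1 k ⟨assemble k t₁ t₂, assemble_stairP k t₁ t₂⟩ (assemble_firstHit k t₁ t₂) = t₁ := by
  apply Subtype.ext
  funext i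
  apply Fin.ext
  show ((assemble k t₁ t₂ ⟨(i : ℕ), _⟩ : Fin (n+1)) : ℕ) - 1 = (t₁.1 i : ℕ)
  rw [assemble_lt k t₁ t₂ (show ((⟨(i : ℕ), _⟩ : Fin (n+1)) : ℕ) < (k : ℕ) from i.isLt)]
  have h2 : t₁.1 ⟨_, _⟩ = t₁.1 i := congrArg _ (Fin.ext rfl)
  rw [h2]
  omega

lemma disasm2_assemble (k : Fin (n+1)) (t₁ : Stair (k : ℕ)) (t₂ : Stair (n - (k : ℕ))) :
    disasm2 k ⟨assemble k t₁ t₂, assemble_stairP k t₁ t₂⟩ = t₂ := by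
  apply Subtype.ext
  funext j
  apply Fin.ext
  show ((assemble k t₁ t₂ ⟨(k : ℕ) + 1 + (j : ℕ), _⟩ : Fin (n+1)) : ℕ) - ((k : ℕ) + 1)
    = (t₂.1 j : ℕ)
  rw [assemble_gt k t₁ t₂
    (show (k : ℕ) < ((⟨(k : ℕ) + 1 + (j : ℕ), _⟩ : Fin (n+1)) : ℕ) by
      simp only [Fin.val_mk]; omega)]
  have h2 : t₂.1 ⟨(k : ℕ) + 1 + (j : ℕ) - ((k : ℕ) + 1), by have := j.isLt; omega⟩ = t₂.1 j :=
    congrArg _ (Fin.ext (by simp only [Fin.val_mk]; omega))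
  rw [h2]
  omega

def fiberEquiv (k : Fin (n+1)) :
    {t : Stair (n+1) // firstHit t = k} ≃ Stair (k : ℕ) × Stair (n - (k : ℕ)) where
  toFun := fun ⟨t, hk⟩ => (disasm1 k t hk, disasm2 k t)
  invFun := fun ⟨t₁, t₂⟩ =>
    ⟨⟨assemble k t₁ t₂, assemble_stairP k t₁ t₂⟩, assemble_firstHit k t₁ t₂⟩
  left_inv := by
    rintro ⟨t, hk⟩
    exact Subtype.ext (Subtype.ext (left_inv_aux k t hk))
  right_inv := by
    rintro ⟨t₁, t₂⟩
    exact Prod.ext (disasm1_assemble k t₁ t₂) (disasm2_assemble k t₁ t₂)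

theorem stair_card : ∀ n, Fintype.card (Stair n) = catalan n := by
  intro n
  induction n using Nat.strong_induction_on with
  | _ n ih =>
    match n with
    | 0 =>
      rw [catalan_zero]
      rw [Fintype.card_eq_one_iff]
      refine ⟨⟨fun i => i.elim0, by constructor <;> intro i <;> exact i.elim0⟩, ?_⟩
      rintro ⟨t, ht⟩
      apply Subtype.ext
      funext i
      exact i.elim0
    | (m + 1) =>
      rw [Fintype.card_congr (Equiv.sigmaFiberEquiv (firstHit (n := m))).symm,
        Fintype.card_sigma]
      rw [catalan_succ]
      apply Finset.sum_congr rfl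
      intro k _
      rw [Fintype.card_congr (fiberEquiv k), Fintype.card_prod,
        ih k (by have := k.isLt; omega), ih (m - (k : ℕ)) (by omega)]

variable {m : ℕ}

def Avoid (σ : Equiv.Perm (Fin m)) : Prop :=
  ¬ ∃ i₁ i₂ i₃ : Fin m, i₁ < i₂ ∧ i₂ < i₃ ∧ σ i₃ < σ i₂ ∧ σ i₂ < σ i₁

def pm (σ : Equiv.Perm (Fin m)) (i : Fin m) : Fin m :=
  ((Finset.Iic i).image σ).max' ⟨σ i, Finset.mem_image_of_mem σ (Finset.mem_Iic.mpr le_rfl)⟩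

lemma le_pm (σ : Equiv.Perm (Fin m)) {j i : Fin m} (h : j ≤ i) : σ j ≤ pm σ i :=
  Finset.le_max' _ _ (Finset.mem_image_of_mem σ (Finset.mem_Iic.mpr h))

lemma pm_mem (σ : Equiv.Perm (Fin m)) (i : Fin m) : ∃ j ≤ i, σ j = pm σ i := by
  have := Finset.max'_mem ((Finset.Iic i).image σ)
    ⟨σ i, Finset.mem_image_of_mem σ (Finset.mem_Iic.mpr le_rfl)⟩
  rw [Finset.mem_image] at this
  obtain ⟨j, hj, hje⟩ := this
  exact ⟨j, Finset.mem_Iic.mp hj, hje⟩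

lemma pm_stair (σ : Equiv.Perm (Fin m)) : StairP m (pm σ) := by
  constructor
  · intro i j hij
    have : pm σ i ≤ pm σ j := by
      apply Finset.max'_le
      intro y hy
      rw [Finset.mem_image] at hy
      obtain ⟨a, ha, hae⟩ := hy
      rw [← hae]
      exact le_pm σ (le_trans (Finset.mem_Iic.mp ha) (by exact hij))
    exact this
  · intro i
    have hsub : (Finset.Iic i).image σ ⊆ Finset.Iic (pm σ i) := by
      intro y hy
      rw [Finset.mem_image] at hy
      obtain ⟨a, ha, hae⟩ := hy
      rw [Finset.mem_Iic, ← hae]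
      exact le_pm σ (Finset.mem_Iic.mp ha)
    have hcard := Finset.card_le_card hsub
    rw [Finset.card_image_of_injective _ σ.injective] at hcard
    rw [Fin.card_Iic, Fin.card_Iic] at hcard
    omega

lemma si_not_mem (σ : Equiv.Perm (Fin m)) (i : Fin m) : σ i ∉ (Finset.Iio i).image σ := by
  rw [Finset.mem_image]
  rintro ⟨j, hj, hje⟩
  have := σ.injective hje
  rw [this] at hj
  exact absurd (Finset.mem_Iio.mp hj) (lt_irrefl i)

lemma detA (σ : Equiv.Perm (Fin m)) (i : Fin m) (h : pm σ i ∉ (Finset.Iio i).image σ) :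
    σ i = pm σ i := by
  obtain ⟨j, hj, hje⟩ := pm_mem σ i
  rcases lt_or_eq_of_le hj with hj' | hj'
  · exact absurd (hje ▸ Finset.mem_image_of_mem σ (Finset.mem_Iio.mpr hj')) h
  · rw [hj'] at hje; rw [hje]

lemma detB (σ : Equiv.Perm (Fin m)) (hσ : Avoid σ) (i : Fin m)
    (h : pm σ i ∈ (Finset.Iio i).image σ) :
    σ i = (Finset.univ \ (Finset.Iio i).image σ).min'
      ⟨σ i, Finset.mem_sdiff.mpr ⟨Finset.mem_univ _, si_not_mem σ i⟩⟩ := by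
  apply le_antisymm
  · apply Finset.le_min'
    intro x hx
    rw [Finset.mem_sdiff] at hx
    set k := σ.symm x with hk
    have hxk : σ k = x := σ.apply_symm_apply x
    have hki : ¬ k < i := by
      intro hki
      exact hx.2 (hxk ▸ Finset.mem_image_of_mem σ (Finset.mem_Iio.mpr hki))
    rcases eq_or_lt_of_le (not_lt.mp hki) with hik | hik
    · rw [← hxk, ← hik]
    · -- i < k; show σ i ≤ x, by contradiction using Avoid
      by_contra hc
      rw [← hxk] at hc
      push_neg at hc
      obtain ⟨j, hj, hje⟩ : ∃ j, j ∈ Finset.Iio i ∧ σ j = pm σ i := by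
        rw [Finset.mem_image] at h; obtain ⟨j, hj, hje⟩ := h; exact ⟨j, hj, hje⟩
      have hij : σ i < σ j := by
        rcases lt_or_eq_of_le (le_pm σ (le_refl i)) with h' | h'
        · rw [hje]; exact h'
        · exfalso
          have : σ i = σ j := by rw [hje, ← h']
          have := σ.injective this
          rw [this] at hj
          exact absurd (Finset.mem_Iio.mp hj) (lt_irrefl _)
      exact hσ ⟨j, i, k, Finset.mem_Iio.mp hj, hik, hc, hij⟩
  · exact Finset.min'_le _ _ (Finset.mem_sdiff.mpr ⟨Finset.mem_univ _, si_not_mem σ i⟩)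

lemma pm_inj {σ τ : Equiv.Perm (Fin m)} (hσ : Avoid σ) (hτ : Avoid τ)
    (hpm : ∀ i, pm σ i = pm τ i) : σ = τ := by
  have key : ∀ v : ℕ, ∀ i : Fin m, (i : ℕ) = v → σ i = τ i := by
    intro v
    induction v using Nat.strong_induction_on with
    | _ v ih =>
      intro i hiv
      have himg : (Finset.Iio i).image σ = (Finset.Iio i).image τ := by
        apply Finset.image_congr
        intro j hj
        rw [Finset.coe_Iio, Set.mem_Iio] at hj
        exact ih j (by rw [← hiv]; exact hj) j rfl
      by_cases hmem : pm σ i ∈ (Finset.Iio i).image σ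
      · have hmem' : pm τ i ∈ (Finset.Iio i).image τ := by
          rw [← himg, ← hpm i]; exact hmem
        rw [detB σ hσ i hmem, detB τ hτ i hmem']
        congr 1
        rw [himg]
      · have hmem' : pm τ i ∉ (Finset.Iio i).image τ := by
          rw [← himg, ← hpm i]; exact hmem
        rw [detA σ i hmem, detA τ i hmem', hpm i]
  exact Equiv.ext fun i => key (i : ℕ) i rfl

def buildL (t : Fin m → Fin m) : ℕ → List (Fin m)
  | 0 => []
  | (k+1) => buildL t k ++ (if h : k < m then
      [if t ⟨k, h⟩ ∈ buildL t k then
         (if h2 : (Finset.univ \ (buildL t k).toFinset).Nonempty then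
            (Finset.univ \ (buildL t k).toFinset).min' h2
          else t ⟨k, h⟩)
       else t ⟨k, h⟩] else [])

def pick (t : Fin m → Fin m) (k : ℕ) (h : k < m) : Fin m :=
  if t ⟨k, h⟩ ∈ buildL t k then
    (if h2 : (Finset.univ \ (buildL t k).toFinset).Nonempty then
       (Finset.univ \ (buildL t k).toFinset).min' h2
     else t ⟨k, h⟩)
  else t ⟨k, h⟩

lemma buildL_succ (t : Fin m → Fin m) (k : ℕ) (h : k < m) :
    buildL t (k+1) = buildL t k ++ [pick t k h] := by
  rw [buildL, dif_pos h]; rfl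

lemma buildL_length (t : Fin m → Fin m) : ∀ k, k ≤ m → (buildL t k).length = k := by
  intro k
  induction k with
  | zero => intro; rfl
  | succ k ih =>
    intro hk
    rw [buildL_succ t k (by omega), List.length_append, ih (by omega)]
    rfl

lemma compl_ne (t : Fin m → Fin m) (k : ℕ) (h : k < m) :
    (Finset.univ \ (buildL t k).toFinset).Nonempty := by
  rw [Finset.sdiff_nonempty]
  intro hsub
  have h1 : (Finset.univ : Finset (Fin m)).card ≤ (buildL t k).toFinset.card :=
    Finset.card_le_card hsub
  have h2 : (buildL t k).toFinset.card ≤ (buildL t k).length := (buildL t k).toFinset_card_le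
  rw [Finset.card_univ, Fintype.card_fin] at h1
  rw [buildL_length t k (by omega)] at h2
  omega

lemma pick_eq (t : Fin m → Fin m) (k : ℕ) (h : k < m) :
    pick t k h = if t ⟨k, h⟩ ∈ buildL t k then
      (Finset.univ \ (buildL t k).toFinset).min' (compl_ne t k h) else t ⟨k, h⟩ := by
  unfold pick
  rw [dif_pos (compl_ne t k h)]

lemma buildL_mono_aux (t : Fin m → Fin m) (k : ℕ) {x : Fin m} (hx : x ∈ buildL t k) :
    ∀ d : ℕ, x ∈ buildL t (k + d) := by
  intro d
  induction d with
  | zero => exact hx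
  | succ d ih =>
    show x ∈ buildL t (k + d + 1)
    rw [buildL]
    exact List.mem_append_left _ ih

lemma buildL_mono (t : Fin m → Fin m) {j k : ℕ} (h : j ≤ k) {x : Fin m}
    (hx : x ∈ buildL t j) : x ∈ buildL t k := by
  have := buildL_mono_aux t j hx (k - j)
  rwa [show j + (k - j) = k by omega] at this

lemma pick_mem_buildL (t : Fin m → Fin m) {j k : ℕ} (hj : j < m) (hjk : j < k) :
    pick t j hj ∈ buildL t k := by
  apply buildL_mono t (show j + 1 ≤ k by omega)
  rw [buildL_succ t j hj]
  exact List.mem_append_right _ (List.mem_singleton_self _)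

lemma buildL_elems (t : Fin m → Fin m) {k : ℕ} {x : Fin m} (hx : x ∈ buildL t k) :
    ∃ j : ℕ, ∃ hj : j < m, j < k ∧ pick t j hj = x := by
  induction k with
  | zero => simp [buildL] at hx
  | succ k ih =>
    rw [buildL] at hx
    rcases List.mem_append.mp hx with h1 | h2
    · obtain ⟨j, hj, hjk, he⟩ := ih h1
      exact ⟨j, hj, by omega, he⟩
    · by_cases h : k < m
      · rw [dif_pos h] at h2
        have : x = pick t k h := by
          rw [List.mem_singleton] at h2
          rw [h2]; rfl
        exact ⟨k, h, by omega, this.symm⟩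
      · rw [dif_neg h] at h2
        simp at h2

lemma pick_fresh (t : Fin m → Fin m) (k : ℕ) (h : k < m) : pick t k h ∉ buildL t k := by
  rw [pick_eq]
  by_cases hmem : t ⟨k, h⟩ ∈ buildL t k
  · rw [if_pos hmem]
    have := Finset.min'_mem _ (compl_ne t k h)
    rw [Finset.mem_sdiff] at this
    intro hc
    exact this.2 (List.mem_toFinset.mpr hc)
  · rw [if_neg hmem]; exact hmem



variable {t : Fin m → Fin m}

lemma pick_le (ht : StairP m t) : ∀ k, ∀ h : k < m, (pick t k h : ℕ) ≤ (t ⟨k, h⟩ : ℕ) := by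
  intro k
  induction k using Nat.strong_induction_on with
  | _ k ih =>
    intro h
    rw [pick_eq]
    by_cases hmem : t ⟨k, h⟩ ∈ buildL t k
    · rw [if_pos hmem]
      set s : Finset (Fin m) := Finset.Iic (t ⟨k, h⟩) with hs
      have hsub : (buildL t k).toFinset ⊆ s := by
        intro x hx
        obtain ⟨j, hj, hjk, he⟩ := buildL_elems t (List.mem_toFinset.mp hx)
        rw [hs, Finset.mem_Iic, Fin.le_def, ← he]
        calc (pick t j hj : ℕ) ≤ (t ⟨j, hj⟩ : ℕ) := ih j hjk hj
          _ ≤ (t ⟨k, h⟩ : ℕ) := ht.1 ⟨j, hj⟩ ⟨k, h⟩ (by simp; omega)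
      have hcard : s.card = (t ⟨k, h⟩ : ℕ) + 1 := Fin.card_Iic _
      have hne : (s \ (buildL t k).toFinset).Nonempty := by
        rw [Finset.sdiff_nonempty]
        intro hsub2
        have h1 := Finset.card_le_card hsub2
        have h2 := (buildL t k).toFinset_card_le
        rw [buildL_length t k (by omega)] at h2
        have h3 := ht.2 ⟨k, h⟩
        simp only [Fin.val_mk] at h3
        omega
      obtain ⟨x, hx⟩ := hne
      rw [Finset.mem_sdiff] at hx
      have h1 : (Finset.univ \ (buildL t k).toFinset).min' (compl_ne t k h) ≤ x :=
        Finset.min'_le _ _ (Finset.mem_sdiff.mpr ⟨Finset.mem_univ _, hx.2⟩)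
      have h2 : x ≤ t ⟨k, h⟩ := Finset.mem_Iic.mp hx.1
      rw [Fin.le_def] at h1 h2
      omega
    · rw [if_neg hmem]

lemma t_mem_buildL (k : ℕ) (h : k < m) : t ⟨k, h⟩ ∈ buildL t (k + 1) := by
  rw [buildL_succ t k h]
  by_cases hmem : t ⟨k, h⟩ ∈ buildL t k
  · exact List.mem_append_left _ hmem
  · apply List.mem_append_right
    rw [pick_eq, if_neg hmem]
    exact List.mem_singleton_self _

lemma pick_min {k : ℕ} {h : k < m} (hlt : (pick t k h : ℕ) < (t ⟨k, h⟩ : ℕ)) :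
    ∀ x : Fin m, x ∉ buildL t k → pick t k h ≤ x := by
  intro x hx
  rw [pick_eq] at hlt ⊢
  by_cases hmem : t ⟨k, h⟩ ∈ buildL t k
  · rw [if_pos hmem] at hlt ⊢
    exact Finset.min'_le _ _ (Finset.mem_sdiff.mpr ⟨Finset.mem_univ _,
      fun hc => hx (List.mem_toFinset.mp hc)⟩)
  · rw [if_neg hmem] at hlt
    omega

def greedy (t : Fin m → Fin m) : Fin m → Fin m := fun i => pick t i i.isLt

lemma greedy_inj : Function.Injective (greedy t) := by
  intro i j hij
  by_contra hne
  rcases Nat.lt_or_ge (i : ℕ) (j : ℕ) with hlt | hge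
  · have h1 : greedy t i ∈ buildL t j := pick_mem_buildL t i.isLt hlt
    rw [hij] at h1
    exact pick_fresh t j j.isLt h1
  · have hlt : (j : ℕ) < (i : ℕ) := by
      rcases Nat.eq_or_lt_of_le hge with he | hl
      · exact absurd (Fin.ext he.symm) hne
      · exact hl
    have h1 : greedy t j ∈ buildL t i := pick_mem_buildL t j.isLt hlt
    rw [← hij] at h1
    exact pick_fresh t i i.isLt h1

noncomputable def greedyPerm (t : Fin m → Fin m) : Equiv.Perm (Fin m) :=
  Equiv.ofBijective (greedy t) (Finite.injective_iff_bijective.mp greedy_inj)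

lemma greedyPerm_apply (i : Fin m) : greedyPerm t i = pick t i i.isLt := rfl

lemma greedy_avoid (ht : StairP m t) :
    ¬ ∃ i₁ i₂ i₃ : Fin m, i₁ < i₂ ∧ i₂ < i₃ ∧
      greedyPerm t i₃ < greedyPerm t i₂ ∧ greedyPerm t i₂ < greedyPerm t i₁ := by
  rintro ⟨j, i, k, hji, hik, h32, h21⟩
  rw [greedyPerm_apply, greedyPerm_apply] at h32 h21
  rw [Fin.lt_def] at hji hik h32 h21
  have hjle : (pick t j j.isLt : ℕ) ≤ (t ⟨(j : ℕ), j.isLt⟩ : ℕ) := pick_le ht j j.isLt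
  have hmono : (t ⟨(j : ℕ), j.isLt⟩ : ℕ) ≤ (t ⟨(i : ℕ), i.isLt⟩ : ℕ) :=
    ht.1 _ _ (by simp; omega)
  have hilt : (pick t i i.isLt : ℕ) < (t ⟨(i : ℕ), i.isLt⟩ : ℕ) := by omega
  have hnotmem : pick t k k.isLt ∉ buildL t i := by
    intro hc
    exact pick_fresh t k k.isLt (buildL_mono t (le_of_lt hik) hc)
  have := pick_min hilt (pick t k k.isLt) hnotmem
  rw [Fin.le_def] at this
  omega

lemma greedy_pm (ht : StairP m t) (i : Fin m) :
    ((Finset.Iic i).image (greedyPerm t)).max'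
      ⟨greedyPerm t i, Finset.mem_image_of_mem _ (Finset.mem_Iic.mpr le_rfl)⟩ = t i := by
  apply le_antisymm
  · apply Finset.max'_le
    intro y hy
    rw [Finset.mem_image] at hy
    obtain ⟨a, ha, hae⟩ := hy
    rw [Finset.mem_Iic] at ha
    rw [← hae, greedyPerm_apply, Fin.le_def]
    calc (pick t a a.isLt : ℕ) ≤ (t ⟨(a : ℕ), a.isLt⟩ : ℕ) := pick_le ht a a.isLt
      _ ≤ (t i : ℕ) := by
          have := ht.1 ⟨(a : ℕ), a.isLt⟩ i (Fin.le_def.mp ha)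
          simpa using this
  · apply Finset.le_max'
    rw [Finset.mem_image]
    have hmem : t ⟨(i : ℕ), i.isLt⟩ ∈ buildL t ((i : ℕ) + 1) := t_mem_buildL (i : ℕ) i.isLt
    obtain ⟨j, hj, hjk, he⟩ := buildL_elems t hmem
    refine ⟨⟨j, hj⟩, Finset.mem_Iic.mpr (by rw [Fin.le_def]; simp; omega), ?_⟩
    rw [greedyPerm_apply]
    have : pick t j hj = t ⟨(i : ℕ), i.isLt⟩ := he
    rw [this]


end ThreeGoodAux

open ThreeGoodAux in
/-- The number of permutations of `{1,…,m}` with no descending subsequence of length 3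
(3-good, i.e. 321-avoiding, permutations) equals the `m`-th Catalan number. -/
theorem card_three_good_perms_eq_catalan (m : ℕ) :
    Nat.card {σ : Equiv.Perm (Fin m) //
      ¬ ∃ i₁ i₂ i₃ : Fin m, i₁ < i₂ ∧ i₂ < i₃ ∧ σ i₃ < σ i₂ ∧ σ i₂ < σ i₁}
      = catalan m := by
  show Nat.card {σ : Equiv.Perm (Fin m) // Avoid σ} = catalan m
  have hb : Function.Bijective
      (fun σp : {σ : Equiv.Perm (Fin m) // Avoid σ} =>
        (⟨pm σp.1, pm_stair σp.1⟩ : Stair m)) := by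
    constructor
    · rintro ⟨σ, hσ⟩ ⟨τ, hτ⟩ h
      apply Subtype.ext
      exact pm_inj hσ hτ (fun i => congrFun (congrArg Subtype.val h) i)
    · rintro ⟨t, ht⟩
      refine ⟨⟨greedyPerm t, greedy_avoid ht⟩, ?_⟩
      apply Subtype.ext
      funext i
      exact greedy_pm ht i
  calc Nat.card {σ : Equiv.Perm (Fin m) // Avoid σ}
      = Nat.card (Stair m) := Nat.card_eq_of_bijective _ hb
    _ = Fintype.card (Stair m) := Nat.card_eq_fintype_card
    _ = catalan m := stair_card m
end

section
/- For commuting variables z₁, …, z_n, one has the identity Σ_{σ ∈ S_n} ∏_{i<j} (1 − z_{σ(i)}⁻¹ z_{σ(j)}) = ∏_{i≠j} (1 − z_i⁻¹ z_j), as identities of Laurent polynomials (equivalently rational functions) in z₁,…,z_n. -/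
open Finset Equiv Matrix

private lemma pairlt_prod {n : ℕ} {F : Type*} [CommRing F] (f : Fin n → Fin n → F) :
    ∏ p ∈ Finset.univ.filter (fun p : Fin n × Fin n => p.1 < p.2), f p.1 p.2
      = ∏ i, ∏ j ∈ Ioi i, f i j :=
  Finset.prod_finset_product' _ _ _ (by simp [mem_Ioi])

private lemma pairlt_prod_right {n : ℕ} {F : Type*} [CommRing F] (f : Fin n → Fin n → F) :
    ∏ p ∈ Finset.univ.filter (fun p : Fin n × Fin n => p.1 < p.2), f p.1 p.2
      = ∏ j, ∏ i ∈ Iio j, f i j :=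
  Finset.prod_finset_product_right' _ _ _ (by simp [mem_Iio, and_comm])

private lemma perm_vdm {n : ℕ} {F : Type*} [CommRing F] (w : Fin n → F)
    (σ : Equiv.Perm (Fin n)) :
    ∏ i, ∏ j ∈ Ioi i, (w (σ j) - w (σ i))
      = ((Equiv.Perm.sign σ : ℤ) : F) * ∏ i, ∏ j ∈ Ioi i, (w j - w i) := by
  have h : (vandermonde w).submatrix σ id = vandermonde (w ∘ σ) := by
    ext i j; simp [vandermonde, submatrix]
  have h2 := Matrix.det_permute σ (vandermonde w)
  rw [h, det_vandermonde, det_vandermonde] at h2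
  simpa using h2

/-- The Laurent-polynomial identity
`Σ_{σ ∈ S_n} ∏_{i<j} (1 − z_{σ(i)}⁻¹ z_{σ(j)}) = ∏_{i≠j} (1 − z_i⁻¹ z_j)`,
stated for arbitrary nonzero values `z₁, …, z_n` in an arbitrary field. -/
theorem sum_perm_prod_eq_prod_offDiag
    {F : Type*} [Field F] (n : ℕ) (z : Fin n → F) (hz : ∀ i, z i ≠ 0) :
    ∑ σ : Equiv.Perm (Fin n),
        ∏ p ∈ Finset.univ.filter (fun p : Fin n × Fin n => p.1 < p.2),
          (1 - (z (σ p.1))⁻¹ * z (σ p.2))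
      = ∏ p ∈ Finset.univ.filter (fun p : Fin n × Fin n => p.1 ≠ p.2),
          (1 - (z p.1)⁻¹ * z p.2) := by
  classical
  set w : Fin n → F := fun i => (z i)⁻¹ with hw
  have key : ∀ a b : Fin n, 1 - (z a)⁻¹ * z b = z b * (w b - w a) := by
    intro a b
    have ha := hz a; have hb := hz b
    simp only [hw]
    field_simp
  set W : F := ∏ i, ∏ j ∈ Ioi i, (w j - w i) with hW
  -- LHS per-term computation
  have lhs_eq : ∀ σ : Equiv.Perm (Fin n),
      (∏ p ∈ Finset.univ.filter (fun p : Fin n × Fin n => p.1 < p.2),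
          (1 - (z (σ p.1))⁻¹ * z (σ p.2)))
        = (((Equiv.Perm.sign σ : ℤ) : F) * ∏ i, z (σ i) ^ (i : ℕ)) * W := by
    intro σ
    calc ∏ p ∈ Finset.univ.filter (fun p : Fin n × Fin n => p.1 < p.2),
          (1 - (z (σ p.1))⁻¹ * z (σ p.2))
        = ∏ p ∈ Finset.univ.filter (fun p : Fin n × Fin n => p.1 < p.2),
            (z (σ p.2) * (w (σ p.2) - w (σ p.1))) :=
          Finset.prod_congr rfl fun p _ => key _ _
      _ = (∏ p ∈ Finset.univ.filter (fun p : Fin n × Fin n => p.1 < p.2), z (σ p.2))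
            * ∏ p ∈ Finset.univ.filter (fun p : Fin n × Fin n => p.1 < p.2),
                (w (σ p.2) - w (σ p.1)) := Finset.prod_mul_distrib
      _ = (∏ i, z (σ i) ^ (i : ℕ)) * (((Equiv.Perm.sign σ : ℤ) : F) * W) := by
          rw [pairlt_prod_right (fun i j => z (σ j)),
            pairlt_prod (fun i j => w (σ j) - w (σ i)), perm_vdm, hW]
          simp [Finset.prod_const, Fin.card_Iio]
      _ = _ := by ring
  -- LHS as determinant
  have hdet : ∑ σ : Equiv.Perm (Fin n),
      (((Equiv.Perm.sign σ : ℤ) : F) * ∏ i, z (σ i) ^ (i : ℕ))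
        = ∏ i, ∏ j ∈ Ioi i, (z j - z i) := by
    rw [← det_vandermonde z, Matrix.det_apply']
    rfl
  have lhs_total : ∑ σ : Equiv.Perm (Fin n),
      ∏ p ∈ Finset.univ.filter (fun p : Fin n × Fin n => p.1 < p.2),
        (1 - (z (σ p.1))⁻¹ * z (σ p.2))
      = (∏ i, ∏ j ∈ Ioi i, (z j - z i)) * W := by
    rw [Finset.sum_congr rfl fun σ _ => lhs_eq σ, ← Finset.sum_mul, hdet]
  -- RHS
  have hsplit : (Finset.univ.filter fun p : Fin n × Fin n => p.1 ≠ p.2)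
      = (Finset.univ.filter fun p : Fin n × Fin n => p.1 < p.2)
        ∪ (Finset.univ.filter fun p : Fin n × Fin n => p.2 < p.1) := by
    rw [← Finset.filter_or]
    exact Finset.filter_congr fun p _ => by
      constructor
      · exact fun h => h.lt_or_gt
      · rintro (h | h)
        exacts [h.ne, h.ne']
  have hswap : ∏ p ∈ (Finset.univ.filter fun p : Fin n × Fin n => p.2 < p.1),
        (1 - (z p.1)⁻¹ * z p.2)
      = ∏ p ∈ (Finset.univ.filter fun p : Fin n × Fin n => p.1 < p.2),
        (1 - (z p.2)⁻¹ * z p.1) := by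
    apply Finset.prod_nbij' Prod.swap Prod.swap <;> simp
  have hdisj : Disjoint (Finset.univ.filter fun p : Fin n × Fin n => p.1 < p.2)
      (Finset.univ.filter fun p : Fin n × Fin n => p.2 < p.1) := by
    simp only [Finset.disjoint_filter]
    intro p _ h1 h2
    exact absurd h2 (not_lt.mpr h1.le)
  have pairkey : ∀ a b : Fin n,
      (1 - (z a)⁻¹ * z b) * (1 - (z b)⁻¹ * z a) = (z b - z a) * (w b - w a) := by
    intro a b
    have ha := hz a; have hb := hz b
    simp only [hw]
    field_simp
  have rhs_total : ∏ p ∈ Finset.univ.filter (fun p : Fin n × Fin n => p.1 ≠ p.2),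
        (1 - (z p.1)⁻¹ * z p.2)
      = (∏ i, ∏ j ∈ Ioi i, (z j - z i)) * W := by
    have hc : ∏ p ∈ (Finset.univ.filter fun p : Fin n × Fin n => p.1 < p.2),
          ((1 - (z p.1)⁻¹ * z p.2) * (1 - (z p.2)⁻¹ * z p.1))
        = ∏ p ∈ (Finset.univ.filter fun p : Fin n × Fin n => p.1 < p.2),
          ((z p.2 - z p.1) * (w p.2 - w p.1)) :=
      Finset.prod_congr rfl fun p _ => pairkey p.1 p.2
    rw [hsplit, Finset.prod_union hdisj, hswap, ← Finset.prod_mul_distrib, hc,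
      pairlt_prod (fun i j => (z j - z i) * (w j - w i)), hW]
    simp [Finset.prod_mul_distrib]
  rw [lhs_total, rhs_total]
end
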